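/- Let n ≥ 1 and n/2 < k ≤ n+1, and c_{n,k} the choice over X_n = {0,…,n} with c_{n,k}(A) = A ∖ {0} if 0 ∈ A and |A| > k, else c_{n,k}(A) = A. Then dem(c_{n,k}) ≤ 2k − 1: the family consisting of the n ballots ṽ_i (where ṽ_i(A) = A ∖ {0} if {0,i} ⊆ A and ṽ_i(A) = A otherwise, for i = 1,…,n) together with 2k−n−1 copies of the neutral ballot is a democratic representation of c_{n,k} of size 2k−1. -/
import Mathlib


/-- `r` rationalizes the quasi-choice `c`: `c A` is the set of `r`-maximal elements of `A`. -/
def Rationalizes {X : Type*} (r : X → X → Prop) (c : Set X → Set X) : Prop :=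
  ∀ A : Set X, c A = {a ∈ A | ∀ b ∈ A, ¬ r b a}

/-- `c` is freely rationalizable (a ballot): rationalized by an arbitrary binary relation. -/
def FreelyRat {X : Type*} (c : Set X → Set X) : Prop :=
  ∃ r : X → X → Prop, Rationalizes r c

/-- `c` is asymmetrically rationalizable. -/
def AsymRat {X : Type*} (c : Set X → Set X) : Prop :=
  ∃ r : X → X → Prop, (∀ a b, r a b → ¬ r b a) ∧ Rationalizes r c

/-- Contractiveness: `c` is a quasi-choice. -/
def IsQuasiChoice {X : Type*} (c : Set X → Set X) : Prop :=
  ∀ A : Set X, c A ⊆ A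

/-- Axiom α (Chernoff, Standard Contraction Consistency). -/
def AxiomAlpha {X : Type*} (c : Set X → Set X) : Prop :=
  ∀ ⦃A B : Set X⦄ ⦃x : X⦄, A ⊆ B → x ∈ A → x ∈ c B → x ∈ c A

/-- Axiom γ (Standard Expansion Consistency). -/
def AxiomGamma {X : Type*} (c : Set X → Set X) : Prop :=
  ∀ ⦃A B : Set X⦄ ⦃x : X⦄, x ∈ c A → x ∈ c B → x ∈ c (A ∪ B)

/-- A liberal representation of `c` by the family of ballots `v`. -/
def IsLiberalRep {X : Type*} (c : Set X → Set X) {k : ℕ} (v : Fin k → Set X → Set X) : Prop :=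
  (∀ i, FreelyRat (v i)) ∧
    ∀ A : Set X, ∀ x ∈ A, (x ∈ c A ↔ ∃ i, x ∈ v i A)

/-- A democratic representation of `c` by the family of ballots `v`:
an item is chosen iff more than half of the ballots endorse it. -/
def IsDemRep {X : Type*} (c : Set X → Set X) {k : ℕ} (v : Fin k → Set X → Set X) : Prop :=
  (∀ i, FreelyRat (v i)) ∧
    ∀ A : Set X, ∀ x ∈ A, (x ∈ c A ↔ 2 * Nat.card {i : Fin k // x ∈ v i A} > k)

/-- The liberal number of `c`: the minimum size of a liberal representation (⊤ if none). -/
noncomputable def lib {X : Type*} (c : Set X → Set X) : ℕ∞ :=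
  sInf {n : ℕ∞ | ∃ (k : ℕ) (v : Fin k → Set X → Set X), 0 < k ∧ IsLiberalRep c v ∧ n = (k : ℕ∞)}

/-- The democratic number of `c`: the minimum size of a democratic representation (⊤ if none). -/
noncomputable def dem {X : Type*} (c : Set X → Set X) : ℕ∞ :=
  sInf {n : ℕ∞ | ∃ (k : ℕ) (v : Fin k → Set X → Set X), 0 < k ∧ IsDemRep c v ∧ n = (k : ℕ∞)}

/-- `c` is `s`-majoritarian: some finite family of ballots selects exactly the items
endorsed by a share of ballots strictly larger than `s`. -/
def Majoritarian {X : Type*} (s : ℝ) (c : Set X → Set X) : Prop :=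
  ∃ (k : ℕ) (v : Fin k → Set X → Set X), 0 < k ∧ (∀ i, FreelyRat (v i)) ∧
    ∀ A : Set X, ∀ x ∈ A,
      (x ∈ c A ↔ (Nat.card {i : Fin k // x ∈ v i A} : ℝ) / (k : ℝ) > s)

open Classical in
/-- The choice `c_{n,k}` over `{0,…,n}`: it removes `0` from menus containing `0` of
size strictly larger than `k`, and is neutral otherwise. -/
noncomputable def cnk (n k : ℕ) : Set (Fin (n + 1)) → Set (Fin (n + 1)) := fun A =>
  if (0 : Fin (n + 1)) ∈ A ∧ k < A.ncard then A \ {0} else A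


def vb (n : ℕ) (j : Fin (n+1)) : Set (Fin (n+1)) → Set (Fin (n+1)) :=
  fun A => {a ∈ A | ¬(j ∈ A ∧ a = 0)}

lemma vb_rat (n : ℕ) (j : Fin (n+1)) : FreelyRat (vb n j) := by
  refine ⟨fun x y => x = j ∧ y = 0, fun A => ?_⟩
  ext a
  simp only [vb, Set.mem_setOf_eq]
  constructor
  · rintro ⟨ha, h⟩
    exact ⟨ha, fun b hb ⟨h1,h2⟩ => h ⟨h1 ▸ hb, h2⟩⟩
  · rintro ⟨ha, h⟩
    exact ⟨ha, fun ⟨hj, h0⟩ => h j hj ⟨rfl, h0⟩⟩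

lemma id_rat (X : Type*) : FreelyRat (id : Set X → Set X) :=
  ⟨fun _ _ => False, fun A => by ext a; simp⟩

open Classical in
theorem stmt18 (n k : ℕ) (hn : 1 ≤ n) (hk1 : n < 2 * k) (hk2 : k ≤ n + 1) :
    dem (cnk n k) ≤ ((2 * k - 1 : ℕ) : ℕ∞) := by
  set m := 2 * k - 1 with hm
  have hk0 : 1 ≤ k := by omega
  have hmn : n ≤ m := by omega
  -- map from Fin m indices to elements 1..n
  let f : Fin m → Fin (n+1) := fun i => ⟨(i.val + 1) % (n+1), Nat.mod_lt _ n.succ_pos⟩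
  have hf : ∀ i : Fin m, i.val < n → (f i).val = i.val + 1 := fun i hi => by
    simp only [f]; exact Nat.mod_eq_of_lt (by omega)
  let v : Fin m → Set (Fin (n+1)) → Set (Fin (n+1)) :=
    fun i => if i.val < n then vb n (f i) else id
  apply sInf_le
  refine ⟨m, v, by omega, ⟨?_, ?_⟩, rfl⟩
  · intro i
    by_cases hi : i.val < n
    · simpa [v, hi] using vb_rat n (f i)
    · simpa [v, hi] using id_rat (Fin (n+1))
  intro A x hxA
  by_cases hx0 : x = 0
  · -- x = 0 case
    subst hx0
    have hAfin : A.Finite := Set.toFinite A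
    have hcnk : (0 : Fin (n+1)) ∈ cnk n k A ↔ A.ncard ≤ k := by
      unfold cnk
      by_cases h : (0 : Fin (n+1)) ∈ A ∧ k < A.ncard
      · rw [if_pos h]
        constructor
        · rintro ⟨-, h0⟩; exact absurd rfl h0
        · intro hle; exact absurd hle (by omega)
      · rw [if_neg h]
        push_neg at h
        exact iff_of_true hxA (h hxA)
    -- count bad ballots
    have key : Nat.card {i : Fin m // (0:Fin (n+1)) ∈ v i A} = m - (A.ncard - 1) := by
      rw [Nat.card_eq_fintype_card, Fintype.card_subtype]
      have hnot : ∀ i : Fin m, ((0:Fin (n+1)) ∈ v i A) ↔ ¬ (i.val < n ∧ f i ∈ A) := by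
        intro i
        by_cases hi : i.val < n
        · have hf0 : f i ≠ 0 := by
            intro h; have := hf i hi; rw [h] at this; simp at this
          simp only [v, if_pos hi, vb, Set.mem_setOf_eq]
          constructor
          · rintro ⟨-, h⟩ ⟨-, hmem⟩; exact h ⟨hmem, by simp⟩
          · intro h; exact ⟨hxA, fun hc => h ⟨hi, hc.1⟩⟩
        · simp [v, hi, hxA]
      have : (Finset.univ.filter (fun i : Fin m => (0:Fin (n+1)) ∈ v i A)).card
          = (Finset.univ.filter (fun i : Fin m => ¬ (i.val < n ∧ f i ∈ A))).card := by
        congr 1; apply Finset.filter_congr; intro i _; simp [hnot i]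
      rw [this]
      have hsplit := Finset.card_filter_add_card_filter_not
        (s := (Finset.univ : Finset (Fin m))) (p := fun i : Fin m => i.val < n ∧ f i ∈ A)
      have hbad : (Finset.univ.filter (fun i : Fin m => i.val < n ∧ f i ∈ A)).card
          = A.ncard - 1 := by
        have hcard : A.ncard = hAfin.toFinset.card := Set.ncard_eq_toFinset_card A hAfin
        have : (Finset.univ.filter (fun i : Fin m => i.val < n ∧ f i ∈ A)).card
            = (hAfin.toFinset.erase 0).card := by
          apply Finset.card_bij (fun i _ => f i)
          · intro i hi
            simp only [Finset.mem_filter] at hi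
            obtain ⟨-, hin, hfA⟩ := hi
            refine Finset.mem_erase.2 ⟨?_, hAfin.mem_toFinset.2 hfA⟩
            intro h; have := hf i hin; rw [h] at this; simp at this
          · intro i hi j hj hij
            simp only [Finset.mem_filter] at hi hj
            have h1 := hf i hi.2.1
            have h2 := hf j hj.2.1
            have : (f i).val = (f j).val := by rw [hij]
            rw [h1, h2] at this
            exact Fin.ext (by omega)
          · intro a ha
            obtain ⟨ha0, haA⟩ := Finset.mem_erase.1 ha
            have haA' : a ∈ A := hAfin.mem_toFinset.1 haA
            have hav : 1 ≤ a.val := by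
              rcases Nat.eq_zero_or_pos a.val with h | h
              · exact absurd (Fin.ext h) ha0
              · exact h
            have halt : a.val ≤ n := by omega
            have hlt : a.val - 1 < m := by omega
            have hi' : ((⟨a.val - 1, hlt⟩ : Fin m)).val < n := by
              show a.val - 1 < n; omega
            have hfv : (f ⟨a.val - 1, hlt⟩) = a := by
              apply Fin.ext
              rw [hf _ hi']
              show a.val - 1 + 1 = a.val; omega
            refine ⟨⟨a.val - 1, hlt⟩, ?_, hfv⟩
            simp only [Finset.mem_filter]
            exact ⟨Finset.mem_univ _, hi', by rw [hfv]; exact haA'⟩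
        rw [this, Finset.card_erase_of_mem (hAfin.mem_toFinset.2 hxA), hcard]
      simp only [Finset.card_univ, Fintype.card_fin] at hsplit
      omega
    rw [hcnk, key]
    have hAcard : 1 ≤ A.ncard := (Set.ncard_pos hAfin).2 ⟨0, hxA⟩
    have hub : A.ncard ≤ n + 1 := by
      have h1 := Set.ncard_le_ncard (Set.subset_univ A) Set.finite_univ
      rwa [Set.ncard_univ, Nat.card_eq_fintype_card, Fintype.card_fin] at h1
    omega
  · -- x ≠ 0 case
    have hall : ∀ i : Fin m, x ∈ v i A := by
      intro i
      by_cases hi : i.val < n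
      · simp only [v, if_pos hi, vb, Set.mem_setOf_eq]
        exact ⟨hxA, fun hc => hx0 hc.2⟩
      · simpa [v, hi] using hxA
    have : Nat.card {i : Fin m // x ∈ v i A} = m := by
      rw [Nat.card_eq_fintype_card, Fintype.card_subtype]
      rw [Finset.filter_true_of_mem (fun i _ => hall i)]
      simp
    rw [this]
    have hc : x ∈ cnk n k A := by
      unfold cnk
      split
      · exact ⟨hxA, hx0⟩
      · exact hxA
    simp [hc]
    omega
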